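/- arXiv:0910.4450 — 3 statements merged into one kernel-verified Lean document; each statement's English description precedes it below -/
import Mathlib

section
/- Let D ⊂ ℝ^d be a convex set containing 0 and Q an invertible linear map with λD ⊆ Q(D) for some λ > 1. Let p be a positive integer with λ^p ≥ p + 1. Then for every n ∈ ℕ, the Minkowski sum D + Q(D) + Q²(D) + ⋯ + Qⁿ(D) is contained in Qⁿ((p+1)D). -/
open Pointwise

lemma aux_smul_subset {d : ℕ} {D : Set (Fin d → ℝ)} (hD : Convex ℝ D)
    (h0 : (0 : Fin d → ℝ) ∈ D) {a b : ℝ} (ha : 0 ≤ a) (hab : a ≤ b) (hb : 0 < b) :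
    a • D ⊆ b • D := by
  rintro _ ⟨x, hx, rfl⟩
  refine ⟨(a / b) • x, hD.smul_mem_of_zero_mem h0 hx ⟨by positivity, by
    rw [div_le_one hb]; exact hab⟩, ?_⟩
  show b • ((a / b) • x) = a • x
  rw [smul_smul]
  congr 1
  field_simp

/-- Under the hypotheses of Statement 2, for every `n` the Minkowski
sum `D + Q(D) + ⋯ + Qⁿ(D)` is contained in `Qⁿ((p+1) • D)`. -/
theorem stmt3 (d : ℕ) (D : Set (Fin d → ℝ)) (hD : Convex ℝ D) (h0 : (0 : Fin d → ℝ) ∈ D)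
    (Q : (Fin d → ℝ) →ₗ[ℝ] (Fin d → ℝ)) (hQ : Function.Bijective Q)
    (lam : ℝ) (hlam : 1 < lam) (hsub : lam • D ⊆ Q '' D)
    (p : ℕ) (hp : 0 < p) (hpow : (p + 1 : ℝ) ≤ lam ^ p) (n : ℕ) :
    (∑ i ∈ Finset.range (n + 1), (Q ^ i) '' D) ⊆ (Q ^ n) '' (((p : ℝ) + 1) • D) := by
  have hlam0 : (0 : ℝ) < lam := lt_trans one_pos hlam
  have hp0 : (0 : ℝ) < (p : ℝ) := by exact_mod_cast hp
  -- key inequality : (p+1)/p ≤ lam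
  have hkey : ((p : ℝ) + 1) / p ≤ lam := by
    rw [div_le_iff₀ hp0]
    by_contra h
    push_neg at h
    have hlt : lam < 1 + 1 / p := by
      have hmul : (p:ℝ) * (1 + 1/p) = p + 1 := by field_simp
      nlinarith
    by_cases hpe : p = 1
    · subst hpe
      simp at hlt hpow
      linarith
    · have h2 : 2 ≤ p := by omega
      have hply : lam ^ p < (1 + 1/p) ^ p := by
        exact pow_lt_pow_left₀ hlt hlam0.le (by omega)
      have he : (1 + 1/(p:ℝ)) ^ p ≤ Real.exp 1 := by
        calc (1 + 1/(p:ℝ)) ^ p ≤ (Real.exp (1/p)) ^ p := by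
              apply pow_le_pow_left₀ (by positivity) (by linarith [Real.add_one_le_exp (1/(p:ℝ))])
          _ = Real.exp (p * (1/p)) := by rw [← Real.exp_nat_mul]
          _ = Real.exp 1 := by rw [mul_one_div, div_self hp0.ne']
      have h3 : (3 : ℝ) ≤ (p : ℝ) + 1 := by
        have : (2:ℝ) ≤ (p:ℝ) := by exact_mod_cast h2
        linarith
      have := Real.exp_one_lt_d9
      linarith
  -- step inclusion: (p+1) • D ⊆ Q '' (p • D)
  have hstep : ((p : ℝ) + 1) • D ⊆ Q '' ((p : ℝ) • D) := by
    have h1 : ((p : ℝ) + 1) • D ⊆ ((p : ℝ) * lam) • D := by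
      apply aux_smul_subset hD h0 (by positivity)
      · calc (p : ℝ) + 1 = p * ((p+1)/p) := by field_simp
          _ ≤ p * lam := by
            apply mul_le_mul_of_nonneg_left hkey hp0.le
      · positivity
    have h2 : ((p : ℝ) * lam) • D ⊆ (p : ℝ) • (Q '' D) := by
      rw [mul_smul]
      exact Set.smul_set_mono hsub
    have h3 : (p : ℝ) • (Q '' D) = Q '' ((p : ℝ) • D) := by
      exact (image_smul_set Q _ D).symm
    exact h1.trans (h2.trans h3.subset)
  induction n with
  | zero =>
    simp only [Finset.sum_range_one, pow_zero, Module.End.one_eq_id, LinearMap.id_coe,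
      Set.image_id]
    have : (1 : ℝ) • D ⊆ ((p : ℝ) + 1) • D :=
      aux_smul_subset hD h0 zero_le_one (by linarith) (by positivity)
    simpa using this
  | succ n ih =>
    rw [Finset.sum_range_succ]
    intro x hx
    rw [Set.mem_add] at hx
    obtain ⟨a, ha, b, hb, rfl⟩ := hx
    have ha' : a ∈ (Q ^ (n+1)) '' ((p : ℝ) • D) := by
      have h1 : a ∈ (Q ^ n) '' (Q '' ((p : ℝ) • D)) :=
        Set.image_mono hstep (ih ha)
      rw [← Set.image_comp] at h1
      have : ⇑(Q ^ n) ∘ ⇑Q = ⇑(Q ^ (n+1)) := by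
        rw [pow_succ]; rfl
      rwa [this] at h1
    obtain ⟨u, hu, rfl⟩ := ha'
    obtain ⟨v, hv, rfl⟩ := hb
    refine ⟨u + v, ?_, (Q ^ (n+1)).map_add u v⟩
    have : ((p : ℝ) + 1) • D = (p : ℝ) • D + (1 : ℝ) • D := hD.add_smul hp0.le zero_le_one
    rw [this]
    exact Set.add_mem_add hu (by simpa using hv)
end

section
/- Let S be a primitive nonnegative m×m matrix, let S' ≤ S with S' ≠ S (entrywise), let q be the Perron–Frobenius eigenvalue of S, and let v ∈ ℝ^m satisfy 0 ≤ v ≤ (1/q) S' v (entrywise). Then v = 0. -/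
open Matrix Polynomial Filter

attribute [local instance] Matrix.linftyOpNormedRing Matrix.linftyOpNormedAlgebra

lemma aux_charpoly_eval {n : Type*} [Fintype n] [DecidableEq n] {R : Type*} [CommRing R]
    (M : Matrix n n R) (μ : R) :
    M.charpoly.eval μ = (Matrix.scalar n μ - M).det := by
  rw [Matrix.charpoly, _root_.eval_det, Matrix.matPolyEquiv_charmatrix]
  simp

lemma aux_isRoot_of_mem_spectrum {n : Type*} [Fintype n] [DecidableEq n]
    (M : Matrix n n ℂ) {μ : ℂ} (h : μ ∈ spectrum ℂ M) : M.charpoly.IsRoot μ := by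
  rw [spectrum.mem_iff] at h
  rw [IsRoot, aux_charpoly_eval]
  by_contra hd
  apply h
  rw [Matrix.isUnit_iff_isUnit_det]
  have : algebraMap ℂ (Matrix n n ℂ) μ = Matrix.scalar n μ := by
    ext i j
    simp [Matrix.algebraMap_matrix_apply, Matrix.scalar, Matrix.diagonal]
  rw [this]
  exact isUnit_iff_ne_zero.mpr hd

lemma aux_mulVec_mono {m : ℕ} {A : Matrix (Fin m) (Fin m) ℝ} (hA : ∀ i j, 0 ≤ A i j)
    {x y : Fin m → ℝ} (h : ∀ i, x i ≤ y i) (i : Fin m) : A.mulVec x i ≤ A.mulVec y i := by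
  simp only [Matrix.mulVec, dotProduct]
  exact Finset.sum_le_sum fun j _ => mul_le_mul_of_nonneg_left (h j) (hA i j)

lemma aux_pow_nonneg {m : ℕ} {S : Matrix (Fin m) (Fin m) ℝ} (hnn : ∀ i j, 0 ≤ S i j) :
    ∀ n i j, 0 ≤ (S ^ n) i j := by
  intro n
  induction n with
  | zero => intro i j; simp [Matrix.one_apply]; split <;> norm_num
  | succ n ih =>
    intro i j
    rw [pow_succ, Matrix.mul_apply]
    exact Finset.sum_nonneg fun k _ => mul_nonneg (ih i k) (hnn k j)

/-- No vector `w > 0` can satisfy `c • w ≤ S w` with `c` strictly above the max root. -/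
lemma aux_no_super_eigen {m : ℕ} (hm : 0 < m) (S : Matrix (Fin m) (Fin m) ℝ)
    (hnn : ∀ i j, 0 ≤ S i j) (q : ℝ) (hq : 0 ≤ q)
    (hq_max : ∀ μ : ℂ, ((S.map (Complex.ofReal)).charpoly).IsRoot μ → ‖μ‖ ≤ q)
    (w : Fin m → ℝ) (hw : ∀ i, 0 < w i) (c : ℝ) (hc : q < c)
    (hcw : ∀ i, c * w i ≤ S.mulVec w i) : False := by
  have hc0 : 0 < c := lt_of_le_of_lt hq hc
  set i1 : Fin m := ⟨0, hm⟩ with hi1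
  -- powers
  have hpow : ∀ (n : ℕ) (i : Fin m), c ^ n * w i ≤ (S ^ n).mulVec w i := by
    intro n
    induction n with
    | zero => intro i; simp [Matrix.one_mulVec]
    | succ n ih =>
      intro i
      have h1 : c ^ (n+1) * w i ≤ c * ((S ^ n).mulVec w i) := by
        calc c ^ (n+1) * w i = c * (c ^ n * w i) := by ring
        _ ≤ c * ((S ^ n).mulVec w i) := by
              exact mul_le_mul_of_nonneg_left (ih i) (le_of_lt hc0)
      refine h1.trans ?_
      have h2 : c * ((S ^ n).mulVec w i) = (S ^ n).mulVec (fun j => c * w j) i := by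
        simp only [Matrix.mulVec, dotProduct, Finset.mul_sum]
        exact Finset.sum_congr rfl fun j _ => by ring
      rw [h2, pow_succ, ← Matrix.mulVec_mulVec]
      exact aux_mulVec_mono (aux_pow_nonneg hnn n) (fun j => hcw j) i
  -- bound row sums from below
  have hwpos1 := hw i1
  set B : ℝ := Finset.univ.sup' ⟨i1, Finset.mem_univ i1⟩ w with hB
  have hB0 : 0 < B := lt_of_lt_of_le hwpos1 (Finset.le_sup' w (Finset.mem_univ i1))
  have hrow : ∀ n : ℕ, c ^ n * w i1 ≤ (∑ j, (S ^ n) i1 j) * B := by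
    intro n
    refine (hpow n i1).trans ?_
    have : (S ^ n).mulVec w i1 = ∑ j, (S ^ n) i1 j * w j := rfl
    rw [this, Finset.sum_mul]
    exact Finset.sum_le_sum fun j _ =>
      mul_le_mul_of_nonneg_left (Finset.le_sup' w (Finset.mem_univ j)) (aux_pow_nonneg hnn n i1 j)
  -- complex matrix and norms
  set M : Matrix (Fin m) (Fin m) ℂ := S.map Complex.ofReal with hM
  have hMpow : ∀ n : ℕ, M ^ n = (S ^ n).map Complex.ofReal := by
    intro n
    have : M = (Complex.ofRealHom.mapMatrix : Matrix (Fin m) (Fin m) ℝ →+* _) S := rfl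
    rw [this, ← map_pow]
    rfl
  have hNormLower : ∀ n : ℕ, (∑ j, (S ^ n) i1 j) ≤ ‖M ^ n‖ := by
    intro n
    have h1 : (∑ j, ‖(M ^ n) i1 j‖₊) ≤ ‖M ^ n‖₊ := by
      rw [Matrix.linfty_opNNNorm_def]
      exact Finset.le_sup (f := fun i => ∑ j, ‖(M ^ n) i j‖₊) (Finset.mem_univ i1)
    have h2 : ((∑ j, ‖(M ^ n) i1 j‖₊ : NNReal) : ℝ) = ∑ j, (S ^ n) i1 j := by
      push_cast
      refine Finset.sum_congr rfl fun j _ => ?_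
      rw [hMpow n]
      simp only [Matrix.map_apply, coe_nnnorm, Complex.norm_real, Real.norm_eq_abs]
      exact abs_of_nonneg (aux_pow_nonneg hnn n i1 j)
    calc (∑ j, (S ^ n) i1 j) = ((∑ j, ‖(M ^ n) i1 j‖₊ : NNReal) : ℝ) := h2.symm
    _ ≤ (‖M ^ n‖₊ : ℝ) := by exact_mod_cast h1
    _ = ‖M ^ n‖ := rfl
  -- spectral radius bound
  haveI : CompleteSpace (Matrix (Fin m) (Fin m) ℂ) := FiniteDimensional.complete ℂ _
  have hrad : spectralRadius ℂ M ≤ ENNReal.ofReal q := by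
    rw [spectralRadius]
    refine iSup₂_le fun z hz => ?_
    have hz' := hq_max z (aux_isRoot_of_mem_spectrum M hz)
    rw [← ENNReal.ofReal_coe_nnreal, coe_nnnorm]
    exact ENNReal.ofReal_le_ofReal (by simpa using hz')
  set c' : ℝ := (q + c) / 2 with hc'
  have hqc' : q < c' := by simp [hc']; linarith
  have hc'c : c' < c := by simp [hc']; linarith
  have hc'0 : 0 < c' := lt_of_le_of_lt hq hqc'
  have hg := spectrum.pow_nnnorm_pow_one_div_tendsto_nhds_spectralRadius M
  have hev : ∀ᶠ n : ℕ in atTop, (‖M ^ n‖₊ : ENNReal) ^ (1 / (n : ℝ)) < ENNReal.ofReal c' :=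
    hg.eventually_lt_const (lt_of_le_of_lt hrad (by
      rw [ENNReal.ofReal_lt_ofReal_iff hc'0]; exact hqc'))
  obtain ⟨N, hN⟩ := eventually_atTop.mp hev
  have hub : ∀ n : ℕ, N ≤ n → 1 ≤ n → ‖M ^ n‖ ≤ c' ^ n := by
    intro n hn h1n
    have hne : (n : ℝ) ≠ 0 := by positivity
    have h0 : (‖M ^ n‖₊ : ENNReal) = ((‖M ^ n‖₊ : ENNReal) ^ (1 / (n : ℝ))) ^ (n : ℝ) := by
      rw [← ENNReal.rpow_mul, one_div_mul_cancel hne, ENNReal.rpow_one]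
    have h1 : (‖M ^ n‖₊ : ENNReal) ≤ (ENNReal.ofReal c') ^ (n : ℝ) := by
      rw [h0]
      exact ENNReal.rpow_le_rpow (le_of_lt (hN n hn)) (by positivity)
    have h2 : (ENNReal.ofReal c') ^ (n : ℝ) = ENNReal.ofReal (c' ^ n) := by
      rw [ENNReal.ofReal_rpow_of_pos hc'0, Real.rpow_natCast]
    rw [h2, ← ENNReal.ofReal_coe_nnreal, coe_nnnorm] at h1
    exact (ENNReal.ofReal_le_ofReal_iff (by positivity)).mp h1
  -- final contradiction
  set ε : ℝ := w i1 / B with hε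
  have hε0 : 0 < ε := div_pos hwpos1 hB0
  have key : ∀ n : ℕ, N ≤ n → 1 ≤ n → ε * c ^ n ≤ c' ^ n := by
    intro n hn h1n
    have h3 : c ^ n * w i1 ≤ c' ^ n * B :=
      (hrow n).trans (mul_le_mul_of_nonneg_right
        ((hNormLower n).trans (hub n hn h1n)) (le_of_lt hB0))
    calc ε * c ^ n = (c ^ n * w i1) / B := by rw [hε]; field_simp
    _ ≤ (c' ^ n * B) / B := (div_le_div_iff_of_pos_right hB0).mpr h3
    _ = c' ^ n := by field_simp
  obtain ⟨k, hk⟩ := pow_unbounded_of_one_lt (1 / ε) ((one_lt_div hc'0).mpr hc'c)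
  set n : ℕ := max N 1 + k with hn
  have hkn : (c / c') ^ k ≤ (c / c') ^ n :=
    pow_le_pow_right₀ (le_of_lt ((one_lt_div hc'0).mpr hc'c)) (Nat.le_add_left k _)
  have h5 := key n (le_trans (le_max_left N 1) (Nat.le_add_right _ _))
    (le_trans (le_max_right N 1) (Nat.le_add_right _ _))
  have h6 : (c / c') ^ n ≤ 1 / ε := by
    rw [div_pow, div_le_div_iff₀ (pow_pos hc'0 n) hε0]
    linarith [h5]
  linarith [lt_of_lt_of_le hk hkn]



/-- Let `S` be a primitive nonnegative `m×m` matrix with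
Perron–Frobenius eigenvalue `q`, let `S' ≤ S` entrywise with `S' ≠ S` and `S'`
nonnegative, and let `v` satisfy `0 ≤ v ≤ (1/q) S' v` entrywise. Then `v = 0`. -/
theorem stmt9 (m : ℕ) (S S' : Matrix (Fin m) (Fin m) ℝ)
    (hnn : ∀ i j, 0 ≤ S i j)
    (hprim : ∃ l : ℕ, ∀ i j, 0 < (S ^ l) i j)
    (hnn' : ∀ i j, 0 ≤ S' i j)
    (hle : ∀ i j, S' i j ≤ S i j)
    (hne : S' ≠ S)
    (q : ℝ)
    (hq_eig : ((S.map (Complex.ofReal)).charpoly).IsRoot (q : ℂ))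
    (hq_max : ∀ μ : ℂ, ((S.map (Complex.ofReal)).charpoly).IsRoot μ → ‖μ‖ ≤ q)
    (v : Fin m → ℝ)
    (hv0 : ∀ i, 0 ≤ v i)
    (hv : ∀ i, v i ≤ q⁻¹ * S'.mulVec v i) :
    v = 0 := by
  rcases Nat.eq_zero_or_pos m with hm0 | hm
  · subst hm0
    haveI : IsEmpty (Fin 0) := inferInstance
    exact Subsingleton.elim v 0
  by_contra hvne
  obtain ⟨j1, hj1⟩ : ∃ j, v j ≠ 0 := by
    by_contra h; push_neg at h; exact hvne (funext h)
  have hj1pos : 0 < v j1 := lt_of_le_of_ne (hv0 j1) (Ne.symm hj1)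
  have hq0 : 0 ≤ q := le_trans (abs_nonneg q) (by simpa using hq_max q hq_eig)
  have hqpos : 0 < q := by
    rcases eq_or_lt_of_le hq0 with h | h
    · exfalso
      have h2 := hv j1
      rw [← h, _root_.inv_zero, zero_mul] at h2
      linarith
    · exact h
  have hvS' : ∀ i, q * v i ≤ S'.mulVec v i := by
    intro i
    calc q * v i ≤ q * (q⁻¹ * S'.mulVec v i) :=
          mul_le_mul_of_nonneg_left (hv i) hqpos.le
    _ = S'.mulVec v i := by field_simp
  have hS'S : ∀ i, S'.mulVec v i ≤ S.mulVec v i := by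
    intro i
    simp only [Matrix.mulVec, dotProduct]
    exact Finset.sum_le_sum fun j _ => mul_le_mul_of_nonneg_right (hle i j) (hv0 j)
  obtain ⟨i0, j0, hij0⟩ : ∃ i j, S' i j < S i j := by
    by_contra h; push_neg at h
    exact hne (by ext i j; exact le_antisymm (hle i j) (h i j))
  obtain ⟨l, hl⟩ := hprim
  rcases Nat.eq_zero_or_pos l with hl0 | hlpos
  · -- degenerate primitivity exponent: identity is positive, so m = 1
    subst hl0
    have hm1 : m = 1 := by
      by_contra h
      have h2 : 2 ≤ m := by omega
      have := hl ⟨0, by omega⟩ ⟨1, by omega⟩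
      rw [pow_zero, Matrix.one_apply_ne (by simp [Fin.ext_iff])] at this
      exact lt_irrefl 0 this
    subst hm1
    have hdet : ((Matrix.scalar (Fin 1) (q:ℂ)) - S.map Complex.ofReal).det = 0 := by
      have := hq_eig; rwa [IsRoot, aux_charpoly_eval] at this
    rw [Matrix.det_fin_one] at hdet
    have hqS : (q : ℂ) = Complex.ofReal (S 0 0) := by
      have : (Matrix.scalar (Fin 1) (q:ℂ) - S.map Complex.ofReal) 0 0
           = (q:ℂ) - Complex.ofReal (S 0 0) := by
        simp [Matrix.scalar, Matrix.map_apply]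
      rw [this] at hdet
      linear_combination hdet
    have hqS' : q = S 0 0 := by exact_mod_cast hqS
    have h00 : S' 0 0 < S 0 0 := by
      have e1 : i0 = 0 := Subsingleton.elim i0 0
      have e2 : j0 = 0 := Subsingleton.elim j0 0
      rwa [e1, e2] at hij0
    have hmv : S'.mulVec v 0 = S' 0 0 * v 0 := by
      simp [Matrix.mulVec, dotProduct, Fin.sum_univ_one]
    have h1 := hvS' 0
    rw [hmv] at h1
    have hv0pos : 0 < v 0 := by
      have : j1 = 0 := Subsingleton.elim j1 0
      rwa [this] at hj1pos
    nlinarith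
  · -- main case
    set P := S ^ l with hP
    have hPnn : ∀ i j, 0 ≤ P i j := fun i j => (hl i j).le
    set u := P.mulVec v with hu
    have hupos : ∀ i, 0 < u i := by
      intro i
      have : u i = ∑ j, P i j * v j := rfl
      rw [this]
      exact Finset.sum_pos' (fun j _ => mul_nonneg (hPnn i j) (hv0 j))
        ⟨j1, Finset.mem_univ j1, mul_pos (hl i j1) hj1pos⟩
    have hcomm : ∀ x : Fin m → ℝ, P.mulVec (S.mulVec x) = S.mulVec (P.mulVec x) := by
      intro x
      rw [hP, Matrix.mulVec_mulVec, Matrix.mulVec_mulVec, ((Commute.refl S).pow_left l).eq]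
    have hqu : ∀ i, q * u i ≤ P.mulVec (S'.mulVec v) i := by
      intro i
      have h1 : P.mulVec (fun j => q * v j) i ≤ P.mulVec (S'.mulVec v) i :=
        aux_mulVec_mono hPnn hvS' i
      have h2 : P.mulVec (fun j => q * v j) i = q * u i := by
        show ∑ j, P i j * (q * v j) = q * ∑ j, P i j * v j
        rw [Finset.mul_sum]
        exact Finset.sum_congr rfl fun j _ => by ring
      linarith
    have hPS : ∀ i, P.mulVec (S'.mulVec v) i ≤ S.mulVec u i := by
      intro i
      have h1 := aux_mulVec_mono hPnn hS'S i
      have h2 : P.mulVec (S.mulVec v) i = S.mulVec u i := congrFun (hcomm v) i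
      linarith
    have hquS : ∀ i, q * u i ≤ S.mulVec u i := fun i => (hqu i).trans (hPS i)
    by_cases hcase : ∀ i, S.mulVec u i = q * u i
    · -- Case A: u is a genuine eigenvector
      have hsand : ∀ i, P.mulVec (S'.mulVec v) i = q * u i := by
        intro i
        refine le_antisymm ?_ (hqu i)
        have := hPS i; rw [hcase i] at this; exact this
      have hexp : ∀ (x : Fin m → ℝ) i, P.mulVec x i = ∑ j, P i j * x j := fun _ _ => rfl
      have hd1z : ∀ j, S'.mulVec v j = q * v j := by
        intro j
        by_contra hne0
        have hdpos : 0 < S'.mulVec v j - q * v j :=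
          sub_pos.mpr (lt_of_le_of_ne (hvS' j) (fun h => hne0 h.symm))
        have hzero : ∑ k, P j1 k * (S'.mulVec v k - q * v k) = 0 := by
          have : ∑ k, P j1 k * (S'.mulVec v k - q * v k)
               = P.mulVec (S'.mulVec v) j1 - q * u j1 := by
            rw [hexp (S'.mulVec v) j1]
            simp only [mul_sub, Finset.sum_sub_distrib]
            congr 1
            rw [hu, hexp v j1, Finset.mul_sum]
            exact Finset.sum_congr rfl fun k _ => by ring
          rw [this, hsand j1, sub_self]
        have hpos : 0 < ∑ k, P j1 k * (S'.mulVec v k - q * v k) :=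
          Finset.sum_pos' (fun k _ => mul_nonneg (hPnn j1 k) (by linarith [hvS' k]))
            ⟨j, Finset.mem_univ j, mul_pos (hl j1 j) hdpos⟩
        linarith
      have hd2z : ∀ j, S.mulVec v j = S'.mulVec v j := by
        intro j
        by_contra hne0
        have hdpos : 0 < S.mulVec v j - S'.mulVec v j :=
          sub_pos.mpr (lt_of_le_of_ne (hS'S j) (fun h => hne0 h.symm))
        have hzero : ∑ k, P j1 k * (S.mulVec v k - S'.mulVec v k) = 0 := by
          have : ∑ k, P j1 k * (S.mulVec v k - S'.mulVec v k)
               = P.mulVec (S.mulVec v) j1 - P.mulVec (S'.mulVec v) j1 := by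
            rw [hexp (S.mulVec v) j1, hexp (S'.mulVec v) j1]
            simp only [mul_sub, Finset.sum_sub_distrib]
          rw [this, congrFun (hcomm v) j1, hcase j1, hsand j1, sub_self]
        have hpos : 0 < ∑ k, P j1 k * (S.mulVec v k - S'.mulVec v k) :=
          Finset.sum_pos' (fun k _ => mul_nonneg (hPnn j1 k) (by linarith [hS'S k]))
            ⟨j, Finset.mem_univ j, mul_pos (hl j1 j) hdpos⟩
        linarith
      have hSv : ∀ j, S.mulVec v j = q * v j := fun j => (hd2z j).trans (hd1z j)
      -- v j0 = 0
      have hvj0 : v j0 = 0 := by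
        have hzero : ∑ j, (S i0 j - S' i0 j) * v j = 0 := by
          have : ∑ j, (S i0 j - S' i0 j) * v j = S.mulVec v i0 - S'.mulVec v i0 := by
            simp only [sub_mul, Finset.sum_sub_distrib]; rfl
          rw [this, hd2z i0, sub_self]
        have hterm : (S i0 j0 - S' i0 j0) * v j0 = 0 := by
          have := (Finset.sum_eq_zero_iff_of_nonneg
            (fun j _ => mul_nonneg (by linarith [hle i0 j]) (hv0 j))).mp hzero j0
            (Finset.mem_univ j0)
          exact this
        rcases mul_eq_zero.mp hterm with h | h
        · exfalso; linarith
        · exact h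
      -- S^l v = q^l v
      have hpowv : ∀ k : ℕ, (S ^ k).mulVec v = fun j => q ^ k * v j := by
        intro k
        induction k with
        | zero => funext j; simp [Matrix.one_mulVec]
        | succ k ih =>
          funext j
          rw [pow_succ', ← Matrix.mulVec_mulVec, ih]
          have : S.mulVec (fun j => q ^ k * v j) j = q ^ k * S.mulVec v j := by
            simp only [Matrix.mulVec, dotProduct, Finset.mul_sum]
            exact Finset.sum_congr rfl fun k' _ => by ring
          rw [this, hSv j]; ring
      have : u j0 = q ^ l * v j0 := by rw [hu, hP, hpowv l]
      rw [hvj0, mul_zero] at this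
      exact absurd this (ne_of_gt (hupos j0))
    · -- Case B: strict somewhere, bootstrap to strictly positive super-eigenvector
      push_neg at hcase
      obtain ⟨i2, hi2⟩ := hcase
      have hi2' : q * u i2 < S.mulVec u i2 := lt_of_le_of_ne (hquS i2) (Ne.symm hi2)
      set w := P.mulVec u with hw
      have hwpos : ∀ i, 0 < w i := by
        intro i
        have : w i = ∑ j, P i j * u j := rfl
        rw [this]
        exact Finset.sum_pos' (fun j _ => mul_nonneg (hPnn i j) (hupos j).le)
          ⟨i2, Finset.mem_univ i2, mul_pos (hl i i2) (hupos i2)⟩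
      have hkey : ∀ i, q * w i < S.mulVec w i := by
        intro i
        have hdiff : S.mulVec w i - q * w i = ∑ j, P i j * (S.mulVec u j - q * u j) := by
          rw [hw, ← hcomm u]
          simp only [Matrix.mulVec, dotProduct, mul_sub, Finset.sum_sub_distrib,
            Finset.mul_sum]
          congr 1
          exact Finset.sum_congr rfl fun j _ => by ring
        have hpos : 0 < ∑ j, P i j * (S.mulVec u j - q * u j) :=
          Finset.sum_pos' (fun j _ => mul_nonneg (hPnn i j) (by linarith [hquS j]))
            ⟨i2, Finset.mem_univ i2, mul_pos (hl i i2) (by linarith)⟩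
        linarith
      haveI : Nonempty (Fin m) := ⟨⟨0, hm⟩⟩
      set c := Finset.univ.inf' Finset.univ_nonempty (fun i => S.mulVec w i / w i) with hc
      have hqc : q < c := by
        rw [hc, Finset.lt_inf'_iff]
        intro i _
        rw [lt_div_iff₀ (hwpos i)]
        linarith [hkey i]
      have hcw : ∀ i, c * w i ≤ S.mulVec w i := by
        intro i
        have h1 : c ≤ S.mulVec w i / w i := Finset.inf'_le _ (Finset.mem_univ i)
        calc c * w i ≤ (S.mulVec w i / w i) * w i :=
              mul_le_mul_of_nonneg_right h1 (hwpos i).le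
        _ = S.mulVec w i := div_mul_cancel₀ _ (ne_of_gt (hwpos i))
      exact aux_no_super_eigen hm S hnn q hq0 hq_max w hwpos c hqc hcw
end

section
/- Let G be a compact topological group with normalized Haar measure μ, let L be a dense subgroup of G, and let Λ_1,…,Λ_m be pairwise disjoint subsets of L. Set W_i = closure of Λ_i in G and Γ_i = W_i ∩ L. If μ(closure(Γ_i \ Λ_i)) = 0 for all i ≤ m, and every nonempty open subset of G has positive Haar measure (which holds automatically), then int(W_i) ∩ int(W_j) = ∅ for all i ≠ j. -/
open MeasureTheory

/-- Let `G` be a compact group with normalized Haar measure `μ`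
(every nonempty open set having positive measure), `L` a dense subgroup, and
`Λ_1,…,Λ_m ⊆ L` pairwise disjoint with `μ(closure(Γ_i \ Λ_i)) = 0` where
`W_i = closure Λ_i`, `Γ_i = W_i ∩ L`. Then `int W_i ∩ int W_j = ∅` for `i ≠ j`. -/
theorem stmt15 (G : Type*) [Group G] [TopologicalSpace G] [IsTopologicalGroup G]
    [CompactSpace G] [MeasurableSpace G] [BorelSpace G]
    (μ : Measure G) [μ.IsHaarMeasure] [IsProbabilityMeasure μ]
    (hopen : ∀ U : Set G, IsOpen U → U.Nonempty → 0 < μ U)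
    (m : ℕ) (L : Subgroup G) (hdense : Dense (L : Set G))
    (Λ : Fin m → Set G) (hsub : ∀ i, Λ i ⊆ (L : Set G))
    (hdisj : ∀ i j : Fin m, i ≠ j → Disjoint (Λ i) (Λ j))
    (hnull : ∀ i : Fin m, μ (closure ((closure (Λ i) ∩ (L : Set G)) \ Λ i)) = 0)
    (i j : Fin m) (hij : i ≠ j) :
    interior (closure (Λ i)) ∩ interior (closure (Λ j)) = ∅ := by
  by_contra h
  set U := interior (closure (Λ i)) ∩ interior (closure (Λ j)) with hU
  have hUopen : IsOpen U := (isOpen_interior.inter isOpen_interior)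
  have hUne : U.Nonempty := Set.nonempty_iff_ne_empty.2 h
  have hsubL : U ∩ (L : Set G) ⊆
      ((closure (Λ i) ∩ (L : Set G)) \ Λ i) ∪ ((closure (Λ j) ∩ (L : Set G)) \ Λ j) := by
    rintro x ⟨⟨hxi, hxj⟩, hxL⟩
    have hxi' : x ∈ closure (Λ i) := interior_subset hxi
    have hxj' : x ∈ closure (Λ j) := interior_subset hxj
    by_cases hx : x ∈ Λ i
    · right
      exact ⟨⟨hxj', hxL⟩, fun hx' => (hdisj i j hij).le_bot ⟨hx, hx'⟩⟩
    · left
      exact ⟨⟨hxi', hxL⟩, hx⟩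
  have hUsub : U ⊆ closure ((closure (Λ i) ∩ (L : Set G)) \ Λ i) ∪
      closure ((closure (Λ j) ∩ (L : Set G)) \ Λ j) := by
    have h1 : U ⊆ closure (U ∩ (L : Set G)) := fun x hx =>
      hUopen.inter_closure ⟨hx, by simp [hdense.closure_eq]⟩
    intro x hx
    have h2 := closure_mono hsubL (h1 hx)
    rwa [closure_union] at h2
  have hμ : μ U = 0 := by
    refine measure_mono_null hUsub ?_
    exact measure_union_null (hnull i) (hnull j)
  exact absurd hμ (hopen U hUopen hUne).ne'
end
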